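/- For all positive integers n and all integers t ≥ 2, the local t-dimension of the n-element chain equals ⌈log_t n⌉. -/

import Mathlib

open Classical Finset Real
open scoped Classical

noncomputable section

/-- A monotone partial function from `P` to the `t`-element chain,
encoded as a function into `Option (Fin t)` (`none` = outside the domain). -/
def MonotonePartial {P : Type*} [PartialOrder P] {t : ℕ} (f : P → Option (Fin t)) : Prop :=
  ∀ ⦃x y : P⦄, x ≤ y → ∀ ⦃a b : Fin t⦄, f x = some a → f y = some b → a ≤ b

/-- `f` separates the pair `(x, y)`: both are in the domain and `f x < f y`. -/
def Separates {P : Type*} {t : ℕ} (f : P → Option (Fin t)) (x y : P) : Prop :=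
  ∃ a b : Fin t, f x = some a ∧ f y = some b ∧ a < b

/-- A local `t`-realiser: a set of monotone partial functions into the `t`-chain
separating every pair `x ≱ y`. -/
def IsLocalRealiser {P : Type*} [PartialOrder P] {t : ℕ}
    (L : Finset (P → Option (Fin t))) : Prop :=
  (∀ f ∈ L, MonotonePartial f) ∧ ∀ x y : P, ¬ y ≤ x → ∃ f ∈ L, Separates f x y

/-- The multiplicity of `x` in `L`: the number of members of `L` whose domain contains `x`. -/
def mult {P : Type*} {t : ℕ} (L : Finset (P → Option (Fin t))) (x : P) : ℕ :=
  (L.filter fun f => (f x).isSome).card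

/-- The local `t`-dimension: minimal possible maximum multiplicity of a local `t`-realiser. -/
def ltdim (t : ℕ) (P : Type*) [PartialOrder P] : ℕ :=
  sInf {d | ∃ L : Finset (P → Option (Fin t)), IsLocalRealiser L ∧ ∀ x, mult L x ≤ d}

lemma mod_le_mod_of_div_eq' (t u w : ℕ) (h : u ≤ w) (hd : u / t = w / t) : u % t ≤ w % t := by
  have e1 := Nat.div_add_mod u t; have e2 := Nat.div_add_mod w t
  have e3 : t * (u / t) = t * (w / t) := by rw [hd]
  omega

lemma mod_lt_mod_of_div_eq' (t u w : ℕ) (h : u < w) (hd : u / t = w / t) : u % t < w % t := by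
  have e1 := Nat.div_add_mod u t; have e2 := Nat.div_add_mod w t
  have e3 : t * (u / t) = t * (w / t) := by rw [hd]
  omega

def trieFun (n t : ℕ) (ht : 2 ≤ t) (k b : ℕ) : Fin n → Option (Fin t) :=
  fun x => if (x : ℕ) / t ^ (k+1) = b then
    some ⟨(x : ℕ) / t ^ k % t, Nat.mod_lt _ (by omega)⟩ else none


def restrictFun {n t : ℕ} (S : Finset (Fin n)) (g : Fin n → Option (Fin t)) :
    Fin n → Option (Fin t) := fun x => if x ∈ S then g x else none

lemma restrict_mono {n t : ℕ} (S : Finset (Fin n)) (g : Fin n → Option (Fin t))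
    (hg : MonotonePartial g) : MonotonePartial (restrictFun S g) := by
  intro x y hxy a b hxa hyb
  unfold restrictFun at hxa hyb
  split at hxa
  · split at hyb
    · exact hg hxy hxa hyb
    · exact absurd hyb (by simp)
  · exact absurd hxa (by simp)

lemma kraft (t n : ℕ) (ht : 2 ≤ t) (N : ℕ) :
    ∀ (L : Finset (Fin n → Option (Fin t))), L.card ≤ N →
    (∀ f ∈ L, MonotonePartial f) →
    ∀ C : Finset (Fin n),
    (∀ x ∈ C, ∀ y ∈ C, ¬ y ≤ x → ∃ f ∈ L, Separates f x y) →
    ∑ x ∈ C, ((t:ℝ)⁻¹) ^ (mult L x) ≤ 1 := by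
  induction N using Nat.strong_induction_on with
  | _ N ih =>
  intro L hcard hmono C hsep
  have htR : (1:ℝ) ≤ (t:ℝ) := by exact_mod_cast (by omega : 1 ≤ t)
  have ht0' : (t:ℝ) ≠ 0 := by positivity
  have hq0 : (0:ℝ) ≤ (t:ℝ)⁻¹ := by positivity
  have hq1 : ((t:ℝ)⁻¹) ≤ 1 := inv_le_one_of_one_le₀ htR
  by_cases hC : C.card ≤ 1
  · calc ∑ x ∈ C, ((t:ℝ)⁻¹) ^ (mult L x) ≤ ∑ _x ∈ C, (1:ℝ) :=
        Finset.sum_le_sum (fun x _ => pow_le_one₀ hq0 hq1)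
      _ = (C.card : ℝ) := by simp
      _ ≤ 1 := by exact_mod_cast hC
  push_neg at hC
  have hCne : C.Nonempty := Finset.card_pos.mp (by omega)
  have hlt : C.min' hCne < C.max' hCne := Finset.min'_lt_max'_of_card C hC
  obtain ⟨f₀, hf₀L, a₀, b₀, hfa, hfb, hab⟩ :=
    hsep _ (C.min'_mem hCne) _ (C.max'_mem hCne) (not_le.mpr hlt)
  have hN1 : 1 ≤ N := le_trans (Finset.card_pos.mpr ⟨f₀, hf₀L⟩) hcard
  set d0 : Fin t := ⟨0, by omega⟩ with hd0
  set D : Finset (Fin n) := C.filter (fun z => (f₀ z).isSome) with hD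
  have hx1D : C.min' hCne ∈ D := Finset.mem_filter.mpr ⟨C.min'_mem hCne, by rw [hfa]; rfl⟩
  set β : Fin n → Fin t := fun z =>
    if h : (D.filter (fun w => w ≤ z)).Nonempty
    then (f₀ ((D.filter (fun w => w ≤ z)).max' h)).getD d0 else d0 with hβ
  have hβD : ∀ z ∈ D, f₀ z = some (β z) := by
    intro z hz
    have hself : z ∈ D.filter (fun w => w ≤ z) := Finset.mem_filter.mpr ⟨hz, le_refl z⟩
    have hne : (D.filter (fun w => w ≤ z)).Nonempty := ⟨z, hself⟩
    have hmax : (D.filter (fun w => w ≤ z)).max' hne = z :=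
      le_antisymm (Finset.max'_le _ _ _ (fun w hw => (Finset.mem_filter.mp hw).2))
        (Finset.le_max' _ z hself)
    obtain ⟨a, ha⟩ := Option.isSome_iff_exists.mp (Finset.mem_filter.mp hz).2
    have hβz : β z = (f₀ z).getD d0 := by
      rw [hβ]
      simp only []
      rw [dif_pos hne, hmax]
    rw [hβz, ha]
    rfl
  set V : Finset (Fin t) := D.image β with hV
  have hVne : V.Nonempty := ⟨β (C.min' hCne), Finset.mem_image_of_mem β hx1D⟩
  have hs1 : 1 ≤ V.card := Finset.card_pos.mpr hVne
  have hst : V.card ≤ t := le_trans (Finset.card_le_univ V) (by simp)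
  -- the per-block bound
  have blocksum : ∀ v : Fin t,
      ∑ x ∈ C.filter (fun z => f₀ z = none ∨ β z = v),
        ((t:ℝ)⁻¹) ^ (mult L x - if (f₀ x).isSome then 1 else 0) ≤ 1 := by
    intro v
    set Cv : Finset (Fin n) := C.filter (fun z => f₀ z = none ∨ β z = v) with hCv
    set Lv : Finset (Fin n → Option (Fin t)) := (L.erase f₀).image (restrictFun Cv) with hLv
    have hLvcard : Lv.card ≤ N - 1 :=
      le_trans Finset.card_image_le (by rw [Finset.card_erase_of_mem hf₀L]; omega)
    have hmonoLv : ∀ g ∈ Lv, MonotonePartial g := by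
      intro g hg
      obtain ⟨g₀, hg₀, rfl⟩ := Finset.mem_image.mp hg
      exact restrict_mono _ _ (hmono _ (Finset.mem_of_mem_erase hg₀))
    have hsepLv : ∀ x ∈ Cv, ∀ y ∈ Cv, ¬ y ≤ x → ∃ g ∈ Lv, Separates g x y := by
      intro x hx y hy hxy
      obtain ⟨hxC, hxv⟩ := Finset.mem_filter.mp hx
      obtain ⟨hyC, hyv⟩ := Finset.mem_filter.mp hy
      obtain ⟨f, hfL, a, b, hfx, hfy, hab'⟩ := hsep x hxC y hyC hxy
      have hne : f ≠ f₀ := by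
        rintro rfl
        have hxD : x ∈ D := Finset.mem_filter.mpr ⟨hxC, by rw [hfx]; rfl⟩
        have hyD : y ∈ D := Finset.mem_filter.mpr ⟨hyC, by rw [hfy]; rfl⟩
        have hxv' : β x = v := by
          rcases hxv with h | h
          · rw [hfx] at h; cases h
          · exact h
        have hyv' : β y = v := by
          rcases hyv with h | h
          · rw [hfy] at h; cases h
          · exact h
        have e1 : a = v := by
          have h1 := hβD x hxD
          rw [hfx, hxv'] at h1
          exact Option.some_inj.mp h1
        have e2 : b = v := by
          have h1 := hβD y hyD
          rw [hfy, hyv'] at h1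
          exact Option.some_inj.mp h1
        rw [e1, e2] at hab'
        exact lt_irrefl v hab'
      refine ⟨restrictFun Cv f,
        Finset.mem_image_of_mem _ (Finset.mem_erase.mpr ⟨hne, hfL⟩), a, b, ?_, ?_, hab'⟩
      · show (if x ∈ Cv then f x else none) = some a
        rw [if_pos hx]; exact hfx
      · show (if y ∈ Cv then f y else none) = some b
        rw [if_pos hy]; exact hfy
    have hIH := ih (N-1) (by omega) Lv hLvcard hmonoLv Cv hsepLv
    refine le_trans (Finset.sum_le_sum ?_) hIH
    intro x hx
    have h1 : mult Lv x ≤ mult (L.erase f₀) x := by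
      unfold mult
      have hsub : (Lv.filter fun f => (f x).isSome) ⊆
          ((L.erase f₀).filter fun g => ((restrictFun Cv g) x).isSome).image (restrictFun Cv) := by
        intro f hf
        obtain ⟨hfim, hps⟩ := Finset.mem_filter.mp hf
        rw [hLv] at hfim
        obtain ⟨g, hg, rfl⟩ := Finset.mem_image.mp hfim
        exact Finset.mem_image_of_mem _ (Finset.mem_filter.mpr ⟨hg, hps⟩)
      refine le_trans (Finset.card_le_card hsub)
        (le_trans Finset.card_image_le (Finset.card_le_card ?_))
      intro g hg
      obtain ⟨hg1, hg2⟩ := Finset.mem_filter.mp hg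
      refine Finset.mem_filter.mpr ⟨hg1, ?_⟩
      have : (restrictFun Cv g) x = g x := by
        unfold restrictFun; rw [if_pos hx]
      rwa [this] at hg2
    have h2 : mult (L.erase f₀) x = mult L x - (if (f₀ x).isSome then 1 else 0) := by
      unfold mult
      rw [Finset.filter_erase]
      by_cases hs : (f₀ x).isSome
      · rw [if_pos hs, Finset.card_erase_of_mem (Finset.mem_filter.mpr ⟨hf₀L, hs⟩)]
      · have hnotmem : f₀ ∉ L.filter (fun f => (f x).isSome) :=
          fun hmem => hs (Finset.mem_filter.mp hmem).2
        rw [if_neg hs, Finset.erase_eq_of_notMem hnotmem, Nat.sub_zero]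
    exact pow_le_pow_of_le_one hq0 hq1 (h2 ▸ h1)
  -- assembly
  set g : Fin n → ℝ :=
    fun x => ((t:ℝ)⁻¹) ^ (mult L x - if (f₀ x).isSome then 1 else 0) with hg
  set G : Finset (Fin n) := C.filter (fun z => f₀ z = none) with hGdef
  have hsplitv : ∀ v ∈ V, ∑ x ∈ C.filter (fun z => f₀ z = none ∨ β z = v), g x
      = (∑ x ∈ D.filter (fun z => β z = v), g x) + ∑ x ∈ G, g x := by
    intro v _
    rw [← Finset.sum_filter_add_sum_filter_not
      (C.filter (fun z => f₀ z = none ∨ β z = v)) (fun z => (f₀ z).isSome) g]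
    congr 1
    · congr 1
      ext z
      simp only [Finset.mem_filter, hD]
      constructor
      · rintro ⟨⟨hzC, hor⟩, hsome⟩
        rcases hor with h | h
        · rw [h] at hsome; cases hsome
        · exact ⟨⟨hzC, hsome⟩, h⟩
      · rintro ⟨⟨hzC, hsome⟩, hv⟩
        exact ⟨⟨hzC, Or.inr hv⟩, hsome⟩
    · congr 1
      ext z
      simp only [Finset.mem_filter, hGdef]
      constructor
      · rintro ⟨⟨hzC, hor⟩, hnsome⟩
        rcases hor with h | h
        · exact ⟨hzC, h⟩
        · exact ⟨hzC, Option.not_isSome_iff_eq_none.mp hnsome⟩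
      · rintro ⟨hzC, hnone⟩
        refine ⟨⟨hzC, Or.inl hnone⟩, ?_⟩
        rw [hnone]; simp
  have main : (∑ x ∈ D, g x) + (V.card : ℝ) * (∑ x ∈ G, g x) ≤ (V.card : ℝ) := by
    have step1 : ∑ v ∈ V, ((∑ x ∈ D.filter (fun z => β z = v), g x) + ∑ x ∈ G, g x)
        ≤ (V.card : ℝ) := by
      calc ∑ v ∈ V, ((∑ x ∈ D.filter (fun z => β z = v), g x) + ∑ x ∈ G, g x)
          = ∑ v ∈ V, ∑ x ∈ C.filter (fun z => f₀ z = none ∨ β z = v), g x :=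
            Finset.sum_congr rfl (fun v hv => (hsplitv v hv).symm)
        _ ≤ ∑ _v ∈ V, (1:ℝ) := Finset.sum_le_sum (fun v _ => blocksum v)
        _ = (V.card : ℝ) := by simp
    have step2 : ∑ v ∈ V, ((∑ x ∈ D.filter (fun z => β z = v), g x) + ∑ x ∈ G, g x)
        = (∑ x ∈ D, g x) + (V.card : ℝ) * (∑ x ∈ G, g x) := by
      rw [Finset.sum_add_distrib, Finset.sum_const,
        Finset.sum_fiberwise_of_maps_to (fun x hx => Finset.mem_image_of_mem β hx) g,
        nsmul_eq_mul]
    rw [← step2]; exact step1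
  have hgD : ∀ x ∈ D, g x = (t:ℝ) * ((t:ℝ)⁻¹) ^ (mult L x) := by
    intro x hx
    have hsome : (f₀ x).isSome := (Finset.mem_filter.mp hx).2
    have hm1 : 1 ≤ mult L x :=
      Finset.card_pos.mpr ⟨f₀, Finset.mem_filter.mpr ⟨hf₀L, hsome⟩⟩
    obtain ⟨m, hm⟩ : ∃ m, mult L x = m + 1 := ⟨mult L x - 1, by omega⟩
    rw [hg]
    simp only []
    rw [if_pos hsome, hm, Nat.add_sub_cancel, pow_succ]
    field_simp
  have hgG : ∀ x ∈ G, g x = ((t:ℝ)⁻¹) ^ (mult L x) := by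
    intro x hx
    have hnone : f₀ x = none := (Finset.mem_filter.mp hx).2
    rw [hg]
    simp only []
    rw [if_neg (by rw [hnone]; simp), Nat.sub_zero]
  rw [Finset.sum_congr rfl hgD, Finset.sum_congr rfl hgG, ← Finset.mul_sum] at main
  have hSD0 : (0:ℝ) ≤ ∑ x ∈ D, ((t:ℝ)⁻¹) ^ (mult L x) :=
    Finset.sum_nonneg (fun x _ => pow_nonneg hq0 _)
  have hSG0 : (0:ℝ) ≤ ∑ x ∈ G, ((t:ℝ)⁻¹) ^ (mult L x) :=
    Finset.sum_nonneg (fun x _ => pow_nonneg hq0 _)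
  have hsplit : ∑ x ∈ C, ((t:ℝ)⁻¹) ^ (mult L x)
      = (∑ x ∈ D, ((t:ℝ)⁻¹) ^ (mult L x)) + ∑ x ∈ G, ((t:ℝ)⁻¹) ^ (mult L x) := by
    rw [← Finset.sum_filter_add_sum_filter_not C (fun z => (f₀ z).isSome)]
    congr 1
    congr 1
    ext z
    simp only [Finset.mem_filter, hGdef, Option.not_isSome_iff_eq_none]
  rw [hsplit]
  have hsR : (1:ℝ) ≤ (V.card : ℝ) := by exact_mod_cast hs1
  have hstR : (V.card : ℝ) ≤ (t:ℝ) := by exact_mod_cast hst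
  nlinarith [main, hSD0, hSG0]


lemma upper_bound (n t d : ℕ) (ht : 2 ≤ t) (hnd : n ≤ t ^ d) :
    ∃ L : Finset (Fin n → Option (Fin t)), IsLocalRealiser L ∧ ∀ x, mult L x ≤ d := by
  classical
  refine ⟨(Finset.range d ×ˢ Finset.range n).image (fun p => trieFun n t ht p.1 p.2), ⟨?_, ?_⟩, ?_⟩
  · -- monotonicity
    intro f hf
    obtain ⟨p, _, rfl⟩ := Finset.mem_image.mp hf
    intro x y hxy a b hxa hyb
    unfold trieFun at hxa hyb
    split at hxa
    · split at hyb
      · rename_i h1 h2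
        rw [Option.some_inj] at hxa hyb
        subst hxa; subst hyb
        show ((x:ℕ) / t ^ p.1 % t) ≤ ((y:ℕ) / t ^ p.1 % t)
        refine mod_le_mod_of_div_eq' t _ _ (Nat.div_le_div_right (by exact_mod_cast hxy)) ?_
        rw [Nat.div_div_eq_div_mul, Nat.div_div_eq_div_mul, ← pow_succ]
        omega
      · exact absurd hyb (by simp)
    · exact absurd hxa (by simp)
  · -- separation
    intro x y hxy
    have hxy : x < y := not_le.mp hxy
    have hxyn : (x:ℕ) < (y:ℕ) := hxy
    have hP0 : ¬ ((x:ℕ) / t ^ 0 = (y:ℕ) / t ^ 0) := by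
      simpa using Nat.ne_of_lt hxyn
    have hPd : ¬ ¬ ((x:ℕ) / t ^ d = (y:ℕ) / t ^ d) := by
      rw [not_not, Nat.div_eq_of_lt (lt_of_lt_of_le x.isLt hnd),
        Nat.div_eq_of_lt (lt_of_lt_of_le y.isLt hnd)]
    have hPk : ¬ ((x:ℕ) / t ^ (Nat.findGreatest (fun k => ¬ ((x:ℕ) / t ^ k = (y:ℕ) / t ^ k)) d)
        = (y:ℕ) / t ^ (Nat.findGreatest (fun k => ¬ ((x:ℕ) / t ^ k = (y:ℕ) / t ^ k)) d)) :=
      Nat.findGreatest_spec (P := fun k => ¬ ((x:ℕ) / t ^ k = (y:ℕ) / t ^ k)) (Nat.zero_le d) hP0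
    set k := Nat.findGreatest (fun k => ¬ ((x:ℕ) / t ^ k = (y:ℕ) / t ^ k)) d with hkdef
    have hkd : k ≤ d := Nat.findGreatest_le d
    have hkd' : k < d := by
      by_contra h
      have hkd2 : k = d := le_antisymm hkd (le_of_not_gt h)
      rw [hkd2] at hPk
      exact hPd hPk
    have hPk1 : ¬ ¬ ((x:ℕ) / t ^ (k+1) = (y:ℕ) / t ^ (k+1)) :=
      Nat.findGreatest_is_greatest (P := fun k => ¬ ((x:ℕ) / t ^ k = (y:ℕ) / t ^ k)) (hkdef ▸ Nat.lt_succ_self k) (by omega)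
    have hb : (x:ℕ) / t ^ (k+1) = (y:ℕ) / t ^ (k+1) := not_not.mp hPk1
    refine ⟨trieFun n t ht k ((x:ℕ) / t ^ (k+1)),
      Finset.mem_image.mpr ⟨(k, (x:ℕ) / t ^ (k+1)), Finset.mem_product.mpr
        ⟨Finset.mem_range.mpr hkd', Finset.mem_range.mpr (lt_of_le_of_lt (Nat.div_le_self _ _) x.isLt)⟩, rfl⟩,
      ⟨(x:ℕ) / t ^ k % t, Nat.mod_lt _ (by omega)⟩,
      ⟨(y:ℕ) / t ^ k % t, Nat.mod_lt _ (by omega)⟩, ?_, ?_, ?_⟩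
    · simp [trieFun]
    · simp [trieFun, hb.symm]
    · show ((x:ℕ) / t ^ k % t) < ((y:ℕ) / t ^ k % t)
      refine mod_lt_mod_of_div_eq' t _ _ ?_ ?_
      · exact lt_of_le_of_ne (Nat.div_le_div_right (le_of_lt hxyn)) hPk
      · rw [Nat.div_div_eq_div_mul, Nat.div_div_eq_div_mul, ← pow_succ]
        omega
  · -- multiplicity
    intro x
    unfold mult
    have hsub : ((Finset.range d ×ˢ Finset.range n).image (fun p => trieFun n t ht p.1 p.2)).filter
        (fun f => (f x).isSome) ⊆ (Finset.range d).image (fun k => trieFun n t ht k ((x:ℕ) / t ^ (k+1))) := by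
      intro f hf
      obtain ⟨hfim, hfs⟩ := Finset.mem_filter.mp hf
      obtain ⟨p, hp, rfl⟩ := Finset.mem_image.mp hfim
      obtain ⟨hp1, _⟩ := Finset.mem_product.mp hp
      have hcond : (x:ℕ) / t ^ (p.1+1) = p.2 := by
        by_contra hc
        unfold trieFun at hfs
        rw [if_neg hc] at hfs
        simp at hfs
      exact Finset.mem_image.mpr ⟨p.1, hp1, by rw [hcond]⟩
    calc _ ≤ ((Finset.range d).image (fun k => trieFun n t ht k ((x:ℕ) / t ^ (k+1)))).card :=
          Finset.card_le_card hsub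
      _ ≤ d := le_trans Finset.card_image_le (by simp)

/-- the local `t`-dimension of the `n`-element chain is `⌈log_t n⌉`. -/
theorem ltdim_chain (n t : ℕ) (hn : 1 ≤ n) (ht : 2 ≤ t) :
    ltdim t (Fin n) = Nat.clog t n := by
  have ht1 : 1 < t := by omega
  apply le_antisymm
  · -- upper bound: the trie realiser
    obtain ⟨L, hreal, hmult⟩ :=
      upper_bound n t (Nat.clog t n) ht (Nat.le_pow_clog ht1 n)
    exact Nat.sInf_le ⟨L, hreal, hmult⟩
  · -- lower bound via the Kraft inequality
    obtain ⟨L₀, hreal₀, hmult₀⟩ :=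
      upper_bound n t (Nat.clog t n) ht (Nat.le_pow_clog ht1 n)
    refine le_csInf ⟨Nat.clog t n, L₀, hreal₀, hmult₀⟩ ?_
    rintro d ⟨L, ⟨hmono, hsep⟩, hmult⟩
    have hq0 : (0:ℝ) ≤ (t:ℝ)⁻¹ := by positivity
    have hq1 : ((t:ℝ)⁻¹) ≤ 1 :=
      inv_le_one_of_one_le₀ (by exact_mod_cast (by omega : 1 ≤ t))
    have hk := kraft t n ht L.card L le_rfl hmono Finset.univ
      (fun x _ y _ hxy => hsep x y hxy)
    have hterm : (n:ℝ) * ((t:ℝ)⁻¹)^d ≤ 1 := by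
      calc (n:ℝ) * ((t:ℝ)⁻¹)^d = ∑ _x : Fin n, ((t:ℝ)⁻¹)^d := by
            rw [Finset.sum_const, Finset.card_univ, Fintype.card_fin, nsmul_eq_mul]
        _ ≤ ∑ x : Fin n, ((t:ℝ)⁻¹)^(mult L x) :=
            Finset.sum_le_sum (fun x _ => pow_le_pow_of_le_one hq0 hq1 (hmult x))
        _ ≤ 1 := hk
    have htd : (0:ℝ) < (t:ℝ)^d := by positivity
    have h2 : (n:ℝ) ≤ (t:ℝ)^d := by
      rw [inv_pow] at hterm
      calc (n:ℝ) = (n:ℝ) * ((t:ℝ)^d)⁻¹ * (t:ℝ)^d := by field_simp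
        _ ≤ 1 * (t:ℝ)^d := mul_le_mul_of_nonneg_right hterm (le_of_lt htd)
        _ = (t:ℝ)^d := one_mul _
    have h3 : n ≤ t ^ d := by exact_mod_cast h2
    exact (Nat.clog_le_iff_le_pow ht1).mpr h3

end
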